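/- Let f : ℤ^d → [0,∞) be summable and log-supermodular, and g : ℤ^d → [0,∞) be summable of product form g(z) = ∏_i g_i(z_i) with each g_i : ℤ → [0,∞) log-concave (g_i(n)² ≥ g_i(n+1)g_i(n-1) and support an interval of integers). Then the convolution f * g on ℤ^d is log-supermodular. -/

import Mathlib

open Finset
open scoped FinsetFamily

section Aux

variable (gi : ℤ → ℝ) (hnn : ∀ n, 0 ≤ gi n)
  (hlc : ∀ n, gi (n + 1) * gi (n - 1) ≤ gi n ^ 2)
  (hsupp : ∀ a b c : ℤ, a ≤ b → b ≤ c → 0 < gi a → 0 < gi c → 0 < gi b)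

include hnn hlc hsupp in
lemma lc_step (u : ℤ) : ∀ v, u ≤ v → gi u * gi (v + 1) ≤ gi (u + 1) * gi v := by
  refine Int.le_induction ?_ ?_
  · rw [mul_comm]
  · intro v hv ih
    rcases eq_or_lt_of_le (hnn u) with h0 | hu
    · calc gi u * gi (v + 1 + 1) = 0 := by rw [← h0]; ring
        _ ≤ _ := mul_nonneg (hnn _) (hnn _)
    rcases eq_or_lt_of_le (hnn (v + 1 + 1)) with h0 | hw
    · calc gi u * gi (v + 1 + 1) = 0 := by rw [← h0]; ring
        _ ≤ _ := mul_nonneg (hnn _) (hnn _)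
    have hk : 0 < gi v := hsupp u v (v + 1 + 1) hv (by omega) hu hw
    have hk1 : 0 < gi (v + 1) := hsupp u (v + 1) (v + 1 + 1) (by omega) (by omega) hu hw
    have h2 := hlc (v + 1)
    have e2 : (v + 1 : ℤ) - 1 = v := by ring
    rw [e2] at h2
    have key : (gi u * gi (v + 1 + 1)) * (gi v * gi (v + 1)) ≤
        (gi (u + 1) * gi (v + 1)) * (gi v * gi (v + 1)) := by
      calc (gi u * gi (v + 1 + 1)) * (gi v * gi (v + 1))
          = (gi u * gi (v + 1)) * (gi (v + 1 + 1) * gi v) := by ring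
        _ ≤ (gi (u + 1) * gi v) * (gi (v + 1) ^ 2) :=
            mul_le_mul ih h2 (mul_nonneg (hnn _) (hnn _))
              (mul_nonneg (hnn _) (hnn _))
        _ = (gi (u + 1) * gi (v + 1)) * (gi v * gi (v + 1)) := by ring
    exact le_of_mul_le_mul_right key (mul_pos hk hk1)

include hnn hlc hsupp in
lemma lc_slide : ∀ (k : ℕ) (u v : ℤ), u + k ≤ v - k →
    gi u * gi v ≤ gi (u + k) * gi (v - k) := by
  intro k
  induction k with
  | zero => intro u v _; simp
  | succ k ih =>
    intro u v h
    have h1 : gi u * gi v ≤ gi (u + 1) * gi (v - 1) := by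
      have := lc_step gi hnn hlc hsupp u (v - 1) (by push_cast at h; omega)
      have e1 : (v - 1 : ℤ) + 1 = v := by ring
      rwa [e1] at this
    have h2 := ih (u + 1) (v - 1) (by push_cast at h ⊢; omega)
    calc gi u * gi v ≤ gi (u + 1) * gi (v - 1) := h1
      _ ≤ gi (u + 1 + k) * gi (v - 1 - k) := h2
      _ = gi (u + (k + 1 : ℕ)) * gi (v - (k + 1 : ℕ)) := by push_cast; ring_nf

include hnn hlc hsupp in
lemma lc_slide' (u v u' v' : ℤ) (h1 : u ≤ u') (h2 : u' ≤ v') (h3 : u + v = u' + v') :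
    gi u * gi v ≤ gi u' * gi v' := by
  have hk : ((u' - u).toNat : ℤ) = u' - u := by omega
  have := lc_slide gi hnn hlc hsupp (u' - u).toNat u v (by rw [hk]; omega)
  rw [hk] at this
  have e1 : u + (u' - u) = u' := by ring
  have e2 : v - (u' - u) = v' := by omega
  rwa [e1, e2] at this

include hnn hlc hsupp in
lemma lc_coord (a b c e : ℤ) :
    gi (a - c) * gi (b - e) ≤ gi (min a b - min c e) * gi (max a b - max c e) := by
  have hsum : (a - c) + (b - e) = (min a b - min c e) + (max a b - max c e) := by omega
  rcases le_total (a - c) (b - e) with h | h <;>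
    rcases le_total (min a b - min c e) (max a b - max c e) with h' | h'
  · exact lc_slide' gi hnn hlc hsupp _ _ _ _ (by omega) h' (by omega)
  · rw [mul_comm (gi (min a b - min c e))]
    exact lc_slide' gi hnn hlc hsupp _ _ _ _ (by omega) h' (by omega)
  · rw [mul_comm (gi (a - c))]
    exact lc_slide' gi hnn hlc hsupp _ _ _ _ (by omega) h' (by omega)
  · rw [mul_comm (gi (a - c)), mul_comm (gi (min a b - min c e))]
    exact lc_slide' gi hnn hlc hsupp _ _ _ _ (by omega) h' (by omega)

end Aux

theorem int_convolution_logConcave_product_logSupermodular (d : ℕ)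
    (f g : (Fin d → ℤ) → ℝ) (gi : Fin d → ℤ → ℝ)
    (hfnn : ∀ x, 0 ≤ f x) (hginn : ∀ i n, 0 ≤ gi i n)
    (hfs : Summable f) (hgs : Summable g)
    (hf : ∀ x y, f x * f y ≤ f (x ⊓ y) * f (x ⊔ y))
    (hlc : ∀ i n, gi i (n + 1) * gi i (n - 1) ≤ gi i n ^ 2)
    (hsupp : ∀ i, ∀ a b c : ℤ, a ≤ b → b ≤ c → 0 < gi i a → 0 < gi i c → 0 < gi i b)
    (hg : ∀ z, g z = ∏ i, gi i (z i)) :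
    ∀ x y, (∑' z, f z * g (x - z)) * (∑' z, f z * g (y - z)) ≤
      (∑' z, f z * g (x ⊓ y - z)) * (∑' z, f z * g (x ⊔ y - z)) := by
  classical
  intro x y
  have hgnn : ∀ z, 0 ≤ g z := by
    intro z; rw [hg]; exact Finset.prod_nonneg fun i _ => hginn i _
  -- key product inequality for g
  have hgkey : ∀ a b : Fin d → ℤ,
      g (x - a) * g (y - b) ≤ g (x ⊓ y - a ⊓ b) * g (x ⊔ y - a ⊔ b) := by
    intro a b
    rw [hg, hg, hg, hg, ← Finset.prod_mul_distrib, ← Finset.prod_mul_distrib]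
    refine Finset.prod_le_prod (fun i _ => mul_nonneg (hginn i _) (hginn i _)) ?_
    intro i _
    have := lc_coord (gi i) (hginn i) (hlc i) (hsupp i) (x i) (y i) (a i) (b i)
    simpa [Pi.sub_apply, Pi.inf_apply, Pi.sup_apply] using this
  set F₁ : (Fin d → ℤ) → ℝ := fun z => f z * g (x - z) with hF₁
  set F₂ : (Fin d → ℤ) → ℝ := fun z => f z * g (y - z) with hF₂
  set F₃ : (Fin d → ℤ) → ℝ := fun z => f z * g (x ⊓ y - z) with hF₃
  set F₄ : (Fin d → ℤ) → ℝ := fun z => f z * g (x ⊔ y - z) with hF₄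
  have hkey : ∀ a b, F₁ a * F₂ b ≤ F₃ (a ⊓ b) * F₄ (a ⊔ b) := by
    intro a b
    have h1 := hf a b
    have h2 := hgkey a b
    calc F₁ a * F₂ b = (f a * f b) * (g (x - a) * g (y - b)) := by ring
      _ ≤ (f (a ⊓ b) * f (a ⊔ b)) * (g (x ⊓ y - a ⊓ b) * g (x ⊔ y - a ⊔ b)) :=
        mul_le_mul h1 h2 (mul_nonneg (hgnn _) (hgnn _)) (mul_nonneg (hfnn _) (hfnn _))
      _ = F₃ (a ⊓ b) * F₄ (a ⊔ b) := by ring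
  have hC : ∀ w, g w ≤ ∑' z, g z := fun w => hgs.le_tsum w fun _ _ => hgnn _
  have hsum : ∀ (v : Fin d → ℤ), Summable fun z => f z * g (v - z) := by
    intro v
    refine Summable.of_nonneg_of_le (fun z => mul_nonneg (hfnn _) (hgnn _))
      (fun z => ?_) (hfs.mul_right (∑' z, g z))
    exact mul_le_mul_of_nonneg_left (hC _) (hfnn z)
  have h₁ : Summable F₁ := hsum x
  have h₂ : Summable F₂ := hsum y
  have h₃ : Summable F₃ := hsum (x ⊓ y)
  have h₄ : Summable F₄ := hsum (x ⊔ y)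
  have hnn₁ : (0 : (Fin d → ℤ) → ℝ) ≤ F₁ := fun z => mul_nonneg (hfnn _) (hgnn _)
  have hnn₂ : (0 : (Fin d → ℤ) → ℝ) ≤ F₂ := fun z => mul_nonneg (hfnn _) (hgnn _)
  have hnn₃ : (0 : (Fin d → ℤ) → ℝ) ≤ F₃ := fun z => mul_nonneg (hfnn _) (hgnn _)
  have hnn₄ : (0 : (Fin d → ℤ) → ℝ) ≤ F₄ := fun z => mul_nonneg (hfnn _) (hgnn _)
  refine le_of_tendsto (Filter.Tendsto.mul h₁.hasSum h₂.hasSum)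
    (Filter.Eventually.of_forall fun s => ?_)
  calc (∑ z ∈ s, F₁ z) * ∑ z ∈ s, F₂ z
      ≤ (∑ z ∈ s ⊼ s, F₃ z) * ∑ z ∈ s ⊻ s, F₄ z :=
        four_functions_theorem F₁ F₂ F₃ F₄ hnn₁ hnn₂ hnn₃ hnn₄ hkey s s
    _ ≤ (∑' z, F₃ z) * ∑' z, F₄ z := by
        refine mul_le_mul (h₃.sum_le_tsum _ (fun z _ => hnn₃ z))
          (h₄.sum_le_tsum _ (fun z _ => hnn₄ z))
          (Finset.sum_nonneg fun z _ => hnn₄ z) (tsum_nonneg fun z => hnn₃ z)
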